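/- Suppose G is an ergodic signed digraph in which, for every pair of vertices i, j, all directed paths from i to j of the same length have the same sign. Then for every pair i, j, all even-length directed paths from i to j have the same sign. -/
import Mathlib

open Matrix Filter Topology Finset

/-- A directed walk of given length in a digraph with edge relation `E`. -/
def DiWalk {V : Type*} (E : V → V → Prop) : ℕ → V → V → Prop
  | 0, i, j => i = j
  | n + 1, i, j => ∃ k, E i k ∧ DiWalk E n k j

/-- Strong connectivity: every node reaches every other node by some walk. -/
def DiStronglyConnected {V : Type*} (E : V → V → Prop) : Prop :=
  ∀ i j : V, ∃ n : ℕ, DiWalk E n i j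

/-- Aperiodicity: the gcd of the lengths of all (positive-length) closed walks is 1. -/
def DiAperiodic {V : Type*} (E : V → V → Prop) : Prop :=
  ∀ d : ℕ, (∀ n : ℕ, 0 < n → (∃ i, DiWalk E n i i) → d ∣ n) → d = 1

/-- A signed directed walk of given length and total sign `s` (product of edge signs). -/
def SWalk {V : Type*} (E : V → V → Prop) (σ : V → V → ℤ) : ℕ → ℤ → V → V → Prop
  | 0, s, i, j => i = j ∧ s = 1
  | n + 1, s, i, j => ∃ k s', E i k ∧ SWalk E σ n s' k j ∧ s = σ i k * s'

/-- Balanced signed digraph: a bipartition with positive edges inside parts,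
negative edges across. -/
def SBalancedG {V : Type*} (E : V → V → Prop) (σ : V → V → ℤ) : Prop :=
  ∃ S : Set V, ∀ i j, E i j → (σ i j = 1 ↔ (i ∈ S ↔ j ∈ S))

/-- Anti-balanced signed digraph: negative edges inside parts, positive edges across. -/
def SAntiBalancedG {V : Type*} (E : V → V → Prop) (σ : V → V → ℤ) : Prop :=
  ∃ S : Set V, ∀ i j, E i j → (σ i j = -1 ↔ (i ∈ S ↔ j ∈ S))

section Aux

variable {V : Type*} {E : V → V → Prop} {σ : V → V → ℤ}

lemma swalk_sign (hσ : ∀ i j, E i j → σ i j = 1 ∨ σ i j = -1) :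
    ∀ {n : ℕ} {s : ℤ} {i j : V}, SWalk E σ n s i j → s = 1 ∨ s = -1 := by
  intro n
  induction n with
  | zero => intro s i j h; exact Or.inl h.2
  | succ n ih =>
    rintro s i j ⟨k, s', hE, hw, rfl⟩
    rcases hσ i k hE with h | h <;> rcases ih hw with h' | h' <;> simp [h, h']

lemma swalk_append : ∀ {n m : ℕ} {s t : ℤ} {i j k : V},
    SWalk E σ n s i j → SWalk E σ m t j k → SWalk E σ (n + m) (s * t) i k := by
  intro n
  induction n with
  | zero =>
    rintro m s t i j k ⟨rfl, rfl⟩ h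
    simpa using h
  | succ n ih =>
    rintro m s t i j k ⟨l, s', hE, hw, rfl⟩ h
    rw [Nat.add_right_comm]
    exact ⟨l, s' * t, hE, ih hw h, by ring⟩

lemma swalk_pow {n : ℕ} {s : ℤ} {i : V} (h : SWalk E σ n s i i) :
    ∀ k : ℕ, SWalk E σ (k * n) (s ^ k) i i := by
  intro k
  induction k with
  | zero => rw [Nat.zero_mul, pow_zero]; exact ⟨rfl, rfl⟩
  | succ k ih =>
    have := swalk_append h ih
    rw [pow_succ, mul_comm (s ^ k) s, show (k+1) * n = n + k * n by ring]
    exact this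

lemma diwalk_sign : ∀ {n : ℕ} {i j : V}, DiWalk E n i j → ∃ s, SWalk E σ n s i j := by
  intro n
  induction n with
  | zero => rintro i j rfl; exact ⟨1, rfl, rfl⟩
  | succ n ih =>
    rintro i j ⟨k, hE, hw⟩
    obtain ⟨s, hs⟩ := ih hw
    exact ⟨σ i k * s, k, s, hE, hs, rfl⟩

lemma swalk_diwalk : ∀ {n : ℕ} {s : ℤ} {i j : V}, SWalk E σ n s i j → DiWalk E n i j := by
  intro n
  induction n with
  | zero => exact fun h => h.1
  | succ n ih => rintro s i j ⟨k, s', hE, hw, rfl⟩; exact ⟨k, hE, ih hw⟩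

/-- In the set of closed-walk lengths at `i`, there are consecutive integers. -/
lemma exists_consecutive_closed (hsc : DiStronglyConnected E) (hap : DiAperiodic E) (i : V) :
    ∃ a b : ℕ, (∃ s, SWalk E σ a s i i) ∧ (∃ s, SWalk E σ b s i i) ∧ a = b + 1 := by
  classical
  set S0 : Set ℕ := {n | ∃ s, SWalk E σ n s i i} with hS0
  have h0 : (0 : ℕ) ∈ S0 := ⟨1, rfl, rfl⟩
  have hadd : ∀ {a b : ℕ}, a ∈ S0 → b ∈ S0 → a + b ∈ S0 := by
    rintro a b ⟨s, hs⟩ ⟨t, ht⟩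
    exact ⟨s * t, swalk_append hs ht⟩
  -- the subgroup of ℤ generated by S0
  set H : AddSubgroup ℤ := AddSubgroup.closure {z : ℤ | ∃ n ∈ S0, z = (n : ℤ)} with hH
  obtain ⟨g, hg⟩ := Int.subgroup_cyclic H
  have hmem : ∀ z : ℤ, z ∈ H ↔ g ∣ z := by
    intro z
    rw [hg, ← AddSubgroup.zmultiples_eq_closure, Int.mem_zmultiples_iff]
  have hdvd : ∀ n ∈ S0, g ∣ (n : ℤ) := by
    intro n hn
    exact (hmem n).1 (AddSubgroup.subset_closure ⟨n, hn, rfl⟩)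
  -- g.natAbs divides all closed walk lengths
  have hdivall : ∀ n : ℕ, 0 < n → (∃ j, DiWalk E n j j) → g.natAbs ∣ n := by
    rintro n hn ⟨j, hw⟩
    obtain ⟨p, hp⟩ := hsc i j
    obtain ⟨q, hq⟩ := hsc j i
    obtain ⟨s1, hs1⟩ := diwalk_sign (σ := σ) hp
    obtain ⟨s2, hs2⟩ := diwalk_sign (σ := σ) hq
    obtain ⟨s3, hs3⟩ := diwalk_sign (σ := σ) hw
    have h1 : (p + q) ∈ S0 := ⟨s1 * s2, swalk_append hs1 hs2⟩
    have h2 : (p + (n + q)) ∈ S0 := ⟨s1 * (s3 * s2), swalk_append hs1 (swalk_append hs3 hs2)⟩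
    have d1 := hdvd _ h1
    have d2 := hdvd _ h2
    have : g ∣ (n : ℤ) := by
      have : ((p : ℤ) + (n + q)) - ((p : ℤ) + q) = (n : ℤ) := by ring
      rw [← this]
      exact dvd_sub (by exact_mod_cast d2) (by exact_mod_cast d1)
    exact Int.natAbs_dvd_natAbs.mpr (by simpa using this)
  have hg1 : g.natAbs = 1 := hap _ hdivall
  have hone : (1 : ℤ) ∈ H := (hmem 1).2 (isUnit_iff_dvd_one.mp (Int.isUnit_iff_natAbs_eq.mpr hg1))
  -- H is contained in differences of elements of S0
  have hK : H ≤ AddSubgroup.mk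
      ⟨⟨{z : ℤ | ∃ a ∈ S0, ∃ b ∈ S0, z = (a : ℤ) - b},
        by rintro x y ⟨a, ha, b, hb, rfl⟩ ⟨c, hc, d, hd, rfl⟩
           exact ⟨a + c, hadd ha hc, b + d, hadd hb hd, by push_cast; ring⟩⟩,
        ⟨0, h0, 0, h0, by simp⟩⟩
      (by rintro x ⟨a, ha, b, hb, rfl⟩; exact ⟨b, hb, a, ha, by ring⟩) := by
    rw [hH]
    apply AddSubgroup.closure_le _ |>.2
    rintro z ⟨n, hn, rfl⟩
    exact ⟨n, hn, 0, h0, by simp⟩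
  obtain ⟨a, ha, b, hb, hab⟩ := hK hone
  exact ⟨a, b, ha, hb, by omega⟩

lemma even_closed_sign (hσ : ∀ i j, E i j → σ i j = 1 ∨ σ i j = -1)
    (hsc : DiStronglyConnected E) (hap : DiAperiodic E)
    (hsame : ∀ (i j : V) (n : ℕ) (s s' : ℤ), 0 < n →
      SWalk E σ n s i j → SWalk E σ n s' i j → s = s')
    {i : V} {L : ℕ} {s : ℤ} (hL : 0 < L) (hLe : Even L) (hw : SWalk E σ L s i i) :
    s = 1 := by
  obtain ⟨a, b, ⟨ta, hta⟩, ⟨tb, htb⟩, hab⟩ := exists_consecutive_closed (σ := σ) hsc hap i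
  have key : ∀ (c : ℕ) (tc : ℤ), SWalk E σ c tc i i → s ^ c = 1 := by
    intro c tc htc
    rcases Nat.eq_zero_or_pos c with rfl | hc
    · exact pow_zero s
    · have h1 : SWalk E σ (c * L) (s ^ c) i i := swalk_pow hw c
      have h2 : SWalk E σ (L * c) (tc ^ L) i i := swalk_pow htc L
      rw [mul_comm] at h2
      have := hsame i i (c * L) _ _ (Nat.mul_pos hc hL) h1 h2
      rw [this]
      rcases swalk_sign hσ htc with rfl | rfl
      · exact one_pow L
      · exact Even.neg_one_pow hLe
  have ha1 : s ^ a = 1 := key a ta hta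
  have hb1 : s ^ b = 1 := key b tb htb
  rw [hab, pow_succ, hb1, one_mul] at ha1
  exact ha1

end Aux

/-- If in an ergodic signed digraph all equal-length paths between any fixed pair
of vertices have the same sign, then all even-length paths between any fixed pair
of vertices have the same sign. -/
theorem same_length_same_sign_imp_even_same_sign {V : Type*}
    (E : V → V → Prop) (σ : V → V → ℤ)
    (hσ : ∀ i j, E i j → σ i j = 1 ∨ σ i j = -1)
    (hsc : DiStronglyConnected E) (hap : DiAperiodic E)
    (hsame : ∀ (i j : V) (n : ℕ) (s s' : ℤ), 0 < n →
      SWalk E σ n s i j → SWalk E σ n s' i j → s = s') :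
    ∀ (i j : V) (n m : ℕ) (s s' : ℤ), 0 < n → 0 < m → Even n → Even m →
      SWalk E σ n s i j → SWalk E σ m s' i j → s = s' := by
  intro i j n m s s' hn hm hen hem h1 h2
  obtain ⟨r, hr⟩ := hsc j i
  obtain ⟨t, ht⟩ := diwalk_sign (σ := σ) hr
  have W : SWalk E σ (n + (r + (m + r))) (s * (t * (s' * t))) i i :=
    swalk_append h1 (swalk_append ht (swalk_append h2 ht))
  obtain ⟨c, hc⟩ := hen
  obtain ⟨d, hd⟩ := hem
  have heven : Even (n + (r + (m + r))) := ⟨c + r + d, by omega⟩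
  have hpos : 0 < n + (r + (m + r)) := by omega
  have key : s * (t * (s' * t)) = 1 := even_closed_sign hσ hsc hap hsame hpos heven W
  rcases swalk_sign hσ ht with rfl | rfl <;>
    rcases swalk_sign hσ h2 with hs' | hs' <;> subst hs' <;>
    rcases swalk_sign hσ h1 with hs | hs <;> subst hs <;> simp_all
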